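/- Norm preservation in expectation under feature hashing: for x ∈ R^n, the expectation of Σ_{j=1}^m (Σ_{i: h(i)=j} g(i) x_i)² equals ‖x‖². -/

import Mathlib

open Finset

lemma rademacher_orth (n : ℕ) (i k : Fin n) :
    (∑ s : Fin n → Bool, (if s i then (1:ℝ) else -1) * (if s k then (1:ℝ) else -1))
    = if i = k then (2:ℝ)^n else 0 := by
  by_cases hik : i = k
  · subst hik
    have : ∀ s : Fin n → Bool,
        (if s i then (1:ℝ) else -1) * (if s i then (1:ℝ) else -1) = 1 := by
      intro s; cases s i <;> norm_num
    simp only [this, Finset.sum_const, Finset.card_univ, nsmul_eq_mul, mul_one]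
    simp [Fintype.card_fun]
  · simp only [hik, if_false]
    set f : (Fin n → Bool) → ℝ :=
      fun s => (if s i then (1:ℝ) else -1) * (if s k then (1:ℝ) else -1) with hf
    have hinv : Function.Involutive (fun s : Fin n → Bool => Function.update s i (!s i)) := by
      intro s
      funext j
      by_cases hj : j = i
      · subst hj; simp
      · simp [Function.update_of_ne hj]
    have he : ∑ s, f ((hinv.toPerm _) s) = ∑ s, f s := Equiv.sum_comp _ f
    have hneg : ∀ s : Fin n → Bool, f ((hinv.toPerm _) s) = - f s := by
      intro s
      have h1 : (Function.update s i (!s i)) i = !s i := by simp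
      have h2 : (Function.update s i (!s i)) k = s k :=
        Function.update_of_ne (fun h => hik h.symm) _ _
      simp only [hf, Function.Involutive.toPerm, Equiv.coe_fn_mk, h1, h2]
      cases s i <;> cases s k <;> norm_num
    have : ∑ s, f s = - ∑ s, f s := by
      calc ∑ s, f s = ∑ s, f ((hinv.toPerm _) s) := he.symm
        _ = ∑ s, - f s := Finset.sum_congr rfl (fun s _ => hneg s)
        _ = - ∑ s, f s := Finset.sum_neg_distrib _
    linarith

lemma rademacher_sq (n : ℕ) (c : Fin n → ℝ) :
    ∑ s : Fin n → Bool, (∑ i : Fin n, (if s i then (1:ℝ) else -1) * c i) ^ 2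
    = (2:ℝ)^n * ∑ i : Fin n, c i ^ 2 := by
  have expand : ∀ s : Fin n → Bool,
      (∑ i : Fin n, (if s i then (1:ℝ) else -1) * c i) ^ 2
      = ∑ i : Fin n, ∑ k : Fin n,
          ((if s i then (1:ℝ) else -1) * (if s k then (1:ℝ) else -1)) * (c i * c k) := by
    intro s
    rw [sq, Finset.sum_mul_sum]
    apply Finset.sum_congr rfl; intro i _
    apply Finset.sum_congr rfl; intro k _
    ring
  simp_rw [expand]
  rw [Finset.sum_comm]
  have : ∀ i : Fin n, ∑ s : Fin n → Bool, ∑ k : Fin n,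
      ((if s i then (1:ℝ) else -1) * (if s k then (1:ℝ) else -1)) * (c i * c k)
      = (2:ℝ)^n * c i ^ 2 := by
    intro i
    rw [Finset.sum_comm]
    have : ∀ k : Fin n, ∑ s : Fin n → Bool,
        ((if s i then (1:ℝ) else -1) * (if s k then (1:ℝ) else -1)) * (c i * c k)
        = (if i = k then (2:ℝ)^n else 0) * (c i * c k) := by
      intro k
      rw [← Finset.sum_mul, rademacher_orth]
    simp_rw [this, ite_mul, zero_mul]
    rw [Finset.sum_ite_eq]
    simp [sq]
  simp_rw [this]
  rw [← Finset.mul_sum]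

/-- Norm preservation in expectation under feature hashing: for `x ∈ ℝⁿ`, the expectation
over uniformly random hash `h` and independent signs of
`Σ_{j=1}^m (Σ_{i : h(i)=j} g(i) x_i)²` equals `‖x‖²`. -/
theorem featureHashing_norm_unbiased (n m : ℕ) (hm : 0 < m) (x : Fin n → ℝ) :
    (∑ h : Fin n → Fin m, ∑ s : Fin n → Bool,
        ∑ j : Fin m,
          (∑ i : Fin n, if h i = j then (if s i then (1:ℝ) else -1) * x i else 0) ^ 2)
      / ((m : ℝ) ^ n * 2 ^ n)
    = ∑ i : Fin n, x i ^ 2 := by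
  have hh : ∀ h : Fin n → Fin m,
      ∑ s : Fin n → Bool, ∑ j : Fin m,
        (∑ i : Fin n, if h i = j then (if s i then (1:ℝ) else -1) * x i else 0) ^ 2
      = (2:ℝ)^n * ∑ i : Fin n, x i ^ 2 := by
    intro h
    rw [Finset.sum_comm]
    have step1 : ∀ (j : Fin m) (s : Fin n → Bool) (i : Fin n),
        (if h i = j then (if s i then (1:ℝ) else -1) * x i else 0)
        = (if s i then (1:ℝ) else -1) * (if h i = j then x i else 0) := by
      intro j s i
      by_cases hij : h i = j <;> simp [hij]
    have step2 : ∀ j : Fin m,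
        ∑ s : Fin n → Bool,
          (∑ i : Fin n, if h i = j then (if s i then (1:ℝ) else -1) * x i else 0) ^ 2
        = (2:ℝ)^n * ∑ i : Fin n, (if h i = j then x i else 0) ^ 2 := by
      intro j
      simp_rw [step1 j]
      exact rademacher_sq n (fun i => if h i = j then x i else 0)
    simp_rw [step2]
    rw [← Finset.mul_sum, Finset.sum_comm]
    congr 1
    apply Finset.sum_congr rfl
    intro i _
    have : ∀ j : Fin m, (if h i = j then x i else 0) ^ 2 = if h i = j then x i ^ 2 else 0 := by
      intro j; by_cases hij : h i = j <;> simp [hij]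
    simp_rw [this]
    rw [Finset.sum_ite_eq]
    simp
  simp_rw [hh]
  rw [Finset.sum_const, Finset.card_univ, nsmul_eq_mul]
  have hcard : (Fintype.card (Fin n → Fin m) : ℝ) = (m:ℝ)^n := by
    simp [Fintype.card_fun]
  rw [hcard]
  have hm' : (m:ℝ) ^ n ≠ 0 := pow_ne_zero _ (by exact_mod_cast hm.ne')
  have h2 : (2:ℝ) ^ n ≠ 0 := pow_ne_zero _ two_ne_zero
  field_simp
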